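/- Let a and b be integers with 0 < a < b and gcd(a, b) = 1, and let K = {0, a, b}. Then K is b-arithmetic in ℤ (i.e. the system A(K) has a nontrivial bounded complex solution) if and only if K is a tile of ℤ (i.e. there exists C ⊆ ℤ such that the translates c + K, c ∈ C, are pairwise disjoint and their union is ℤ). -/

import Mathlib

/- STATEMENT 7: For coprime integers `0 < a < b` and `K = {0, a, b}`, the set `K` is
b-arithmetic in ℤ (the system `A(K)` has a nontrivial bounded complex solution) iff
`K` is a tile of ℤ (some family of translates `c + K`, `c ∈ C`, partitions ℤ). -/

open Polynomial


noncomputable def Tsh : (ℤ → ℂ) →ₗ[ℂ] (ℤ → ℂ) where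
  toFun x := fun n => x (n + 1)
  map_add' _ _ := rfl
  map_smul' _ _ := rfl

lemma Tsh_pow (k : ℕ) (x : ℤ → ℂ) (n : ℤ) : (Tsh ^ k) x n = x (n + k) := by
  induction k generalizing x n with
  | zero => simp
  | succ k ih =>
    rw [pow_succ, Module.End.mul_apply, ih]
    show x (n + k + 1) = x (n + (k + 1))
    congr 1
    omega

lemma Tsh_apply (x : ℤ → ℂ) (n : ℤ) : Tsh x n = x (n + 1) := rfl

def Bdd (x : ℤ → ℂ) : Prop := ∃ M : ℝ, ∀ n : ℤ, ‖x n‖ ≤ M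

lemma bdd_aeval (p : ℂ[X]) (x : ℤ → ℂ) (h : Bdd x) : Bdd (aeval Tsh p x) := by
  obtain ⟨M, hM⟩ := h
  induction p using Polynomial.induction_on with
  | C c =>
    refine ⟨‖c‖ * M, fun n => ?_⟩
    have : (aeval Tsh (C c)) x = c • x := by
      rw [aeval_C]; rfl
    rw [this]
    simp only [Pi.smul_apply, smul_eq_mul, norm_mul]
    exact mul_le_mul_of_nonneg_left (hM n) (by positivity)
  | add p q hp hq =>
    obtain ⟨M1, h1⟩ := hp
    obtain ⟨M2, h2⟩ := hq
    refine ⟨M1 + M2, fun n => ?_⟩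
    rw [map_add]
    exact le_trans (norm_add_le _ _) (add_le_add (h1 n) (h2 n))
  | monomial k c _ =>
    refine ⟨‖c‖ * M, fun n => ?_⟩
    have : (aeval Tsh (C c * X ^ (k+1))) x = c • ((Tsh ^ (k+1)) x) := by
      rw [map_mul, aeval_C, aeval_X_pow]; rfl
    rw [this]
    simp only [Pi.smul_apply, smul_eq_mul, norm_mul, Tsh_pow]
    exact mul_le_mul_of_nonneg_left (hM _) (by positivity)


lemma geom_vanish (r : ℂ) (hr1 : ‖r‖ ≠ 1) (y : ℤ → ℂ)
    (hy : ∀ n, y (n + 1) = r * y n) (hb : Bdd y) : y = 0 := by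
  by_cases hr0 : r = 0
  · funext n
    have := hy (n - 1)
    rw [hr0, zero_mul, sub_add_cancel] at this
    exact this
  · have hz : ∀ n : ℤ, y n = r ^ n * y 0 := by
      intro n
      induction n using Int.induction_on with
      | zero => simp
      | succ k ih => rw [hy k, ih, zpow_add_one₀ hr0]; ring
      | pred k ih =>
        have h2 := hy (-(k : ℤ) - 1)
        rw [sub_add_cancel, ih] at h2
        have he : r ^ (-(k:ℤ) - 1) = r⁻¹ * r ^ (-(k:ℤ)) := by
          rw [← zpow_neg_one, ← zpow_add₀ hr0]; ring_nf
        rw [he, mul_assoc, h2, ← mul_assoc, inv_mul_cancel₀ hr0, one_mul]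
    by_cases h0 : y 0 = 0
    · funext n; rw [hz n, h0, mul_zero]; rfl
    · exfalso
      obtain ⟨M, hM⟩ := hb
      have habs : ∀ n : ℤ, ‖r‖ ^ n * ‖y 0‖ ≤ M := by
        intro n
        have := hM n
        rw [hz n, norm_mul, norm_zpow] at this
        exact this
      have hy0 : 0 < ‖y 0‖ := by
        simpa [norm_pos_iff] using h0
      have hrpos : 0 < ‖r‖ := by
        simpa [norm_pos_iff] using hr0
      rcases lt_or_gt_of_ne hr1 with hlt | hgt
      · -- |r| < 1 : use large negative n
        obtain ⟨k, hk⟩ := pow_unbounded_of_one_lt (M / ‖y 0‖) ((one_lt_inv₀ hrpos).mpr hlt)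
        have := habs (-(k : ℤ))
        rw [zpow_neg, zpow_natCast, ← inv_pow] at this
        have h2 : (‖r‖)⁻¹ ^ k ≤ M / ‖y 0‖ :=
          (le_div_iff₀ hy0).mpr this
        exact absurd h2 (not_le.mpr hk)
      · obtain ⟨k, hk⟩ := pow_unbounded_of_one_lt (M / ‖y 0‖) hgt
        have := habs (k : ℤ)
        rw [zpow_natCast] at this
        have h2 : (‖r‖) ^ k ≤ M / ‖y 0‖ :=
          (le_div_iff₀ hy0).mpr this
        exact absurd h2 (not_le.mpr hk)

lemma key_vanish : ∀ (N : ℕ) (p : ℂ[X]), p.natDegree ≤ N → p ≠ 0 →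
    (∀ r : ℂ, p.IsRoot r → ‖r‖ ≠ 1) →
    ∀ x : ℤ → ℂ, Bdd x → (aeval Tsh p) x = 0 → x = 0 := by
  intro N
  induction N with
  | zero =>
    intro p hdeg hp _ x _ hsol
    obtain ⟨c, rfl⟩ := Polynomial.natDegree_eq_zero.mp (Nat.le_zero.mp hdeg)
    have hc : c ≠ 0 := fun h => hp (by rw [h, map_zero])
    have : (aeval Tsh (C c)) x = c • x := by rw [aeval_C]; rfl
    rw [this] at hsol
    have := smul_eq_zero.mp hsol
    tauto
  | succ N IH =>
    intro p hdeg hp hroots x hx hsol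
    by_cases hdN : p.natDegree ≤ N
    · exact IH p hdN hp hroots x hx hsol
    · have hdpos : 0 < p.degree := by
        rw [Polynomial.degree_eq_natDegree hp]
        exact_mod_cast Nat.pos_of_ne_zero (by omega)
      obtain ⟨r, hr⟩ := Complex.exists_root hdpos
      obtain ⟨q, hq⟩ := (dvd_iff_isRoot.mpr hr)
      have hq0 : q ≠ 0 := by
        rintro rfl
        rw [mul_zero] at hq
        exact hp hq
      set y := (aeval Tsh q) x with hy
      have hyz : (aeval Tsh (X - C r)) y = 0 := by
        rw [hy, ← Module.End.mul_apply, ← map_mul, ← hq, hsol]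
      have hystep : ∀ n, y (n + 1) = r * y n := by
        intro n
        have := congrFun hyz n
        rw [map_sub, aeval_X, aeval_C] at this
        have h2 : Tsh y n - r * y n = 0 := this
        rw [Tsh_apply] at h2
        exact sub_eq_zero.mp h2
      have hY : y = 0 := geom_vanish r (hroots r hr) y hystep (bdd_aeval q x hx)
      have hqd : q.natDegree ≤ N := by
        have : p.natDegree = 1 + q.natDegree := by
          rw [hq, Polynomial.natDegree_mul (X_sub_C_ne_zero r) hq0, natDegree_X_sub_C]
        omega
      refine IH q hqd hq0 (fun r' hr' => hroots r' ?_) x hx hY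
      rw [Polynomial.IsRoot, hq, eval_mul, hr'.eq_zero, mul_zero]


lemma root_circle_div (a b : ℤ) (ha : 0 < a) (hab : a < b) (hgcd : IsCoprime a b)
    (r : ℂ) (habs : ‖r‖ = 1)
    (hroot : 1 + r ^ a.toNat + r ^ b.toNat = 0) : (3 : ℤ) ∣ a + b := by
  have hr0 : r ≠ 0 := by
    intro h; rw [h] at habs; simp at habs
  set u : ℂ := r ^ a.toNat with hu
  set v : ℂ := r ^ b.toNat with hv
  have hau : ‖u‖ = 1 := by
    rw [hu, norm_pow, habs, one_pow]
  have hav : ‖v‖ = 1 := by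
    rw [hv, norm_pow, habs, one_pow]
  have hnu : Complex.normSq u = 1 := by
    rw [← Complex.sq_norm, hau]; norm_num
  have hnv : Complex.normSq v = 1 := by
    rw [← Complex.sq_norm, hav]; norm_num
  -- v = -1 - u
  have hvu : v = -1 - u := by linear_combination hroot
  -- normSq (1 + u) = 1
  have h1u : Complex.normSq (1 + u) = 1 := by
    have : (1 : ℂ) + u = -v := by rw [hvu]; ring
    rw [this, Complex.normSq_neg, hnv]
  have hre : u.re = -(1/2) := by
    have := Complex.normSq_add 1 u
    rw [h1u, hnu, Complex.normSq_one] at this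
    simp only [one_mul, Complex.conj_re] at this
    linarith
  have hconj : (starRingEnd ℂ) u = -1 - u := by
    have h1 := Complex.add_conj u
    rw [hre] at h1
    have : u + (starRingEnd ℂ) u = -1 := by rw [h1]; norm_num
    linear_combination this
  have hmc := Complex.mul_conj u
  rw [hconj, hnu] at hmc
  have huq : u ^ 2 + u + 1 = 0 := by
    have : u * (-1 - u) = 1 := by rw [hmc]; norm_num
    linear_combination -this
  have hu3 : u ^ 3 = 1 := by linear_combination (u - 1) * huq
  have hveq : v = u ^ 2 := by linear_combination hvu - huq
  have hv3 : v ^ 3 = 1 := by rw [hveq]; linear_combination (u^3+1) * hu3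
  -- zpow versions
  have hza : r ^ (3 * a) = 1 := by
    have : ((3 * a.toNat : ℕ) : ℤ) = 3 * a := by
      push_cast [Int.toNat_of_nonneg ha.le]; ring
    rw [← this, zpow_natCast, pow_mul', ← hu, hu3]
  have hzb : r ^ (3 * b) = 1 := by
    have hb : 0 < b := lt_trans ha hab
    have : ((3 * b.toNat : ℕ) : ℤ) = 3 * b := by
      push_cast [Int.toNat_of_nonneg hb.le]; ring
    rw [← this, zpow_natCast, pow_mul', ← hv, hv3]
  obtain ⟨m, n, hmn⟩ := hgcd
  have hr3 : r ^ (3 : ℤ) = 1 := by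
    have : (3 : ℤ) = (3 * a) * m + (3 * b) * n := by linear_combination 3 * hmn.symm
    rw [this, zpow_add₀ hr0, zpow_mul r (3*a) m, zpow_mul r (3*b) n, hza, hzb, one_zpow, one_zpow, one_mul]
  have hrne1 : r ≠ 1 := by
    intro h
    have hu1 : u = 1 := by rw [hu, h, one_pow]
    have hv1 : v = 1 := by rw [hv, h, one_pow]
    rw [hu1, hv1] at hroot
    norm_num at hroot
  -- r ^ (a + b) = 1
  have hrab : r ^ (a + b) = 1 := by
    have hb : 0 < b := lt_trans ha hab
    have hcast : ((a.toNat + b.toNat : ℕ) : ℤ) = a + b := by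
      push_cast [Int.toNat_of_nonneg ha.le, Int.toNat_of_nonneg hb.le]; ring
    rw [← hcast, zpow_natCast, pow_add, ← hu, ← hv]
    linear_combination u * hveq + hu3
  -- conclude
  by_contra hdvd
  obtain ⟨k, hk⟩ : ∃ k, a + b = 3 * k + 1 ∨ a + b = 3 * k + 2 := ⟨(a + b) / 3, by omega⟩
  rcases hk with hk | hk
  · apply hrne1
    calc r = r ^ (3 * k + 1) * (r ^ (3:ℤ)) ^ (-k) := by
            rw [hr3, one_zpow, mul_one, zpow_add₀ hr0, zpow_one, zpow_mul, hr3, one_zpow, one_mul]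
      _ = 1 := by rw [← hk, hrab, hr3, one_zpow, one_mul]
  · have hr2 : r ^ (2:ℤ) = 1 := by
      calc r ^ (2:ℤ) = r ^ (3 * k + 2) * (r ^ (3:ℤ)) ^ (-k) := by
            rw [hr3, one_zpow, mul_one, zpow_add₀ hr0, zpow_mul, hr3, one_zpow, one_mul]
        _ = 1 := by rw [← hk, hrab, hr3, one_zpow, one_mul]
    have hr2' : r ^ (2:ℕ) = 1 := by rw [← zpow_natCast r 2]; exact_mod_cast hr2
    have hr3' : r ^ (3:ℕ) = 1 := by rw [← zpow_natCast r 3]; exact_mod_cast hr3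
    exact hrne1 (by linear_combination hr3' - r * hr2')


lemma not_three_dvd (a b : ℤ) (hgcd : IsCoprime a b) (h3 : (3:ℤ) ∣ a + b) :
    ¬ (3:ℤ) ∣ a ∧ ¬ (3:ℤ) ∣ b := by
  obtain ⟨m, n, hmn⟩ := hgcd
  constructor
  · intro hda
    have hdb : (3:ℤ) ∣ b := (dvd_add_right hda).mp h3
    have : (3:ℤ) ∣ 1 := hmn ▸ dvd_add (Dvd.dvd.mul_left hda m) (Dvd.dvd.mul_left hdb n)
    norm_num at this
  · intro hdb
    have hda : (3:ℤ) ∣ a := (dvd_add_left hdb).mp h3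
    have : (3:ℤ) ∣ 1 := hmn ▸ dvd_add (Dvd.dvd.mul_left hda m) (Dvd.dvd.mul_left hdb n)
    norm_num at this

lemma dvd_to_tile (a b : ℤ) (ha : 0 < a) (hab : a < b) (hgcd : IsCoprime a b)
    (h3 : (3:ℤ) ∣ a + b) :
    ∃ C : Set ℤ, (C.PairwiseDisjoint fun c => (fun s => c + s) '' ({0, a, b} : Set ℤ)) ∧
        ⋃ c ∈ C, (fun s => c + s) '' ({0, a, b} : Set ℤ) = Set.univ := by
  obtain ⟨hna, hnb⟩ := not_three_dvd a b hgcd h3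
  refine ⟨{c : ℤ | (3:ℤ) ∣ c}, ?_, ?_⟩
  · intro c hc c' hc' hne
    simp only [Set.mem_setOf_eq] at hc hc'
    simp only [Function.onFun]
    rw [Set.disjoint_left]
    rintro m ⟨s, hs, rfl⟩ ⟨s', hs', heq⟩
    simp only [Set.mem_insert_iff, Set.mem_singleton_iff] at hs hs'
    apply hne
    -- c' = c
    have : c' + s' = c + s := heq
    rcases hs with rfl | rfl | rfl <;> rcases hs' with rfl | rfl | rfl <;> omega
  · rw [Set.eq_univ_iff_forall]
    intro m
    simp only [Set.mem_iUnion, Set.mem_image, Set.mem_setOf_eq, Set.mem_insert_iff,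
      Set.mem_singleton_iff]
    have ha3 : a % 3 = 1 ∨ a % 3 = 2 := by omega
    obtain ⟨k, hk⟩ := h3
    have : (3:ℤ) ∣ m ∨ (3:ℤ) ∣ (m - a) ∨ (3:ℤ) ∣ (m - b) := by omega
    rcases this with h | h | h
    · exact ⟨m, h, 0, Or.inl rfl, by ring⟩
    · exact ⟨m - a, h, a, Or.inr (Or.inl rfl), by ring⟩
    · exact ⟨m - b, h, b, Or.inr (Or.inr rfl), by ring⟩

lemma tile_to_barith (a b : ℤ) (ha : 0 < a) (hab : a < b)
    (C : Set ℤ) (hdisj : C.PairwiseDisjoint fun c => (fun s => c + s) '' ({0, a, b} : Set ℤ))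
    (hcover : ⋃ c ∈ C, (fun s => c + s) '' ({0, a, b} : Set ℤ) = Set.univ) :
    ∃ x : ℤ → ℂ, x ≠ 0 ∧ (∃ M : ℝ, ∀ n : ℤ, ‖x n‖ ≤ M) ∧
        ∀ n : ℤ, ∑ s ∈ ({0, a, b} : Finset ℤ), x (n + s) = 0 := by
  classical
  have h0a : a ≠ (0:ℤ) := ha.ne'
  have h0b : b ≠ (0:ℤ) := (ha.trans hab).ne'
  have hab' : a ≠ b := hab.ne
  -- uniqueness of representation
  have huniq : ∀ m s s' : ℤ, s ∈ ({0,a,b} : Set ℤ) → s' ∈ ({0,a,b} : Set ℤ) →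
      m - s ∈ C → m - s' ∈ C → s = s' := by
    intro m s s' hs hs' hc hc'
    by_contra hne
    have hcc : m - s ≠ m - s' := fun h => hne (by omega)
    have hd := hdisj hc hc' hcc
    simp only [Function.onFun] at hd
    rw [Set.disjoint_left] at hd
    exact hd ⟨s, hs, by ring⟩ ⟨s', hs', by ring⟩
  have hmem : ∀ s : ℤ, s ∈ ({0,a,b} : Set ℤ) ↔ (s = 0 ∨ s = a ∨ s = b) := by
    intro s; simp [Set.mem_insert_iff]
  -- indicator sum identity
  have hind : ∀ m : ℤ, ((if m ∈ C then (3:ℂ) else 0) + (if m - a ∈ C then (3:ℂ) else 0)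
      + (if m - b ∈ C then (3:ℂ) else 0)) = 3 := by
    intro m
    have hm : m ∈ ⋃ c ∈ C, (fun s => c + s) '' ({0, a, b} : Set ℤ) := by
      rw [hcover]; trivial
    simp only [Set.mem_iUnion, Set.mem_image] at hm
    obtain ⟨c, hcC, s₀, hs₀, hcs⟩ := hm
    have hc0 : m - s₀ ∈ C := by rw [← hcs]; simpa using hcC
    have key : ∀ s : ℤ, s ∈ ({0,a,b} : Set ℤ) →
        ((m - s ∈ C) ↔ s = s₀) := by
      intro s hs
      constructor
      · intro hsc; exact huniq m s s₀ hs hs₀ hsc hc0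
      · rintro rfl; exact hc0
    have e0 := key 0 (by simp)
    have ea := key a (by simp)
    have eb := key b (by simp [hmem])
    rw [sub_zero] at e0
    rcases (hmem s₀).mp hs₀ with rfl | rfl | rfl
    · rw [if_pos (e0.mpr rfl), if_neg (fun h => h0a (ea.mp h)),
        if_neg (fun h => h0b (eb.mp h))]
      norm_num
    · rw [if_neg (fun h => h0a (e0.mp h).symm), if_pos (ea.mpr rfl),
        if_neg (fun h => hab' (eb.mp h).symm)]
      norm_num
    · rw [if_neg (fun h => h0b (e0.mp h).symm), if_pos (eb.mpr rfl),
        if_neg (fun h => hab' (ea.mp h))]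
      norm_num
  refine ⟨fun n => (if (-n) ∈ C then (3:ℂ) else 0) - 1, ?_, ⟨4, ?_⟩, ?_⟩
  · intro h
    have := congrFun h 0
    simp only [Pi.zero_apply, neg_zero] at this
    split_ifs at this <;> norm_num at this
  · intro n
    show ‖(if -n ∈ C then (3:ℂ) else 0) - 1‖ ≤ 4
    split_ifs <;> norm_num
  · intro n
    have hsum : ∀ g : ℤ → ℂ, ∑ s ∈ ({0,a,b} : Finset ℤ), g s = g 0 + g a + g b := by
      intro g
      rw [Finset.sum_insert (by simp only [Finset.mem_insert, Finset.mem_singleton]; push_neg; omega),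
        Finset.sum_insert (by simp only [Finset.mem_singleton]; omega),
        Finset.sum_singleton]
      ring
    rw [hsum]
    have := hind (-n)
    have e1 : -n - a = -(n + a) := by ring
    have e2 : -n - b = -(n + b) := by ring
    rw [e1, e2] at this
    simp only [add_zero]
    linear_combination this


lemma barith_to_dvd (a b : ℤ) (ha : 0 < a) (hab : a < b) (hgcd : IsCoprime a b)
    (x : ℤ → ℂ) (hx0 : x ≠ 0) (hxb : ∃ M : ℝ, ∀ n : ℤ, ‖x n‖ ≤ M)
    (hsol : ∀ n : ℤ, ∑ s ∈ ({0,a,b} : Finset ℤ), x (n + s) = 0) : (3:ℤ) ∣ a + b := by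
  have hb : 0 < b := ha.trans hab
  have hat : (a.toNat : ℤ) = a := Int.toNat_of_nonneg ha.le
  have hbt : (b.toNat : ℤ) = b := Int.toNat_of_nonneg hb.le
  have hatn : a.toNat ≠ 0 := by omega
  have hbtn : b.toNat ≠ 0 := by omega
  set p : ℂ[X] := 1 + X ^ a.toNat + X ^ b.toNat with hp
  have hp0 : p ≠ 0 := by
    intro h
    have : p.eval 0 = 0 := by rw [h, eval_zero]
    rw [hp] at this
    simp [eval_add, eval_pow, eval_X, eval_one, zero_pow hatn, zero_pow hbtn] at this
  have hsum : ∀ n : ℤ, x n + x (n + a) + x (n + b) = 0 := by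
    intro n
    have h := hsol n
    rw [Finset.sum_insert (by simp only [Finset.mem_insert, Finset.mem_singleton]; push_neg; omega),
      Finset.sum_insert (by simp only [Finset.mem_singleton]; omega),
      Finset.sum_singleton, add_zero] at h
    linear_combination h
  have haev : (aeval Tsh p) x = 0 := by
    funext n
    rw [hp, map_add, map_add, map_one]
    show ((1 : Module.End ℂ (ℤ → ℂ)) x + (aeval Tsh (X ^ a.toNat)) x
      + (aeval Tsh (X ^ b.toNat)) x) n = 0
    rw [aeval_X_pow, aeval_X_pow]
    show x n + (Tsh ^ a.toNat) x n + (Tsh ^ b.toNat) x n = 0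
    rw [Tsh_pow, Tsh_pow, hat, hbt]
    exact hsum n
  by_contra h3
  apply hx0
  refine key_vanish p.natDegree p le_rfl hp0 ?_ x hxb haev
  intro r hr habs
  apply h3
  apply root_circle_div a b ha hab hgcd r habs
  have := hr.eq_zero
  rw [hp] at this
  simpa [eval_add, eval_pow, eval_X, eval_one] using this

theorem stmt_7 (a b : ℤ) (ha : 0 < a) (hab : a < b) (hgcd : IsCoprime a b) :
    (∃ x : ℤ → ℂ, x ≠ 0 ∧ (∃ M : ℝ, ∀ n : ℤ, ‖x n‖ ≤ M) ∧
        ∀ n : ℤ, ∑ s ∈ ({0, a, b} : Finset ℤ), x (n + s) = 0) ↔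
      ∃ C : Set ℤ, (C.PairwiseDisjoint fun c => (fun s => c + s) '' ({0, a, b} : Set ℤ)) ∧
        ⋃ c ∈ C, (fun s => c + s) '' ({0, a, b} : Set ℤ) = Set.univ := by
  constructor
  · rintro ⟨x, hx0, hxb, hsol⟩
    exact dvd_to_tile a b ha hab hgcd (barith_to_dvd a b ha hab hgcd x hx0 hxb hsol)
  · rintro ⟨C, hdisj, hcover⟩
    exact tile_to_barith a b ha hab C hdisj hcover
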